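/- Let A be a 2×2 integer matrix with det A = 1, and let L be a ℤ-submodule of Fin 2 → ℤ such that the quotient (Fin 2 → ℤ) ⧸ L is finite and nontrivial index is allowed. Then the following are equivalent: (1) L is invariant under A, i.e. Submodule.map A.mulVecLin L ≤ L; (2) there exist a 2×2 integer matrix B with det B = 1 and a ℤ-linear isomorphism h : (Fin 2 → ℤ) ≃ₗ[ℤ] L such that for every v : Fin 2 → ℤ, the image in Fin 2 → ℤ of h (B.mulVecLin v) equals A.mulVecLin applied to the image of h v. -/

import Mathlib

/-- For `A ∈ SL(2,ℤ)` and a finite-index ℤ-submodule `L ≤ ℤ²`, `L` is `A`-invariant if and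
only if there are `B ∈ SL(2,ℤ)` and a ℤ-linear isomorphism `h : ℤ² ≃ L` intertwining the
action of `B` on `ℤ²` with the action of `A` on `L`. -/
theorem invariant_submodule_iff_conjugate_matrix (A : Matrix (Fin 2) (Fin 2) ℤ)
    (hA : A.det = 1) (L : Submodule ℤ (Fin 2 → ℤ)) (hL : Finite ((Fin 2 → ℤ) ⧸ L)) :
    Submodule.map A.mulVecLin L ≤ L ↔
      ∃ (B : Matrix (Fin 2) (Fin 2) ℤ) (h : (Fin 2 → ℤ) ≃ₗ[ℤ] L), B.det = 1 ∧
        ∀ v : Fin 2 → ℤ, ((h (B.mulVecLin v) : Fin 2 → ℤ)) = A.mulVecLin (h v : Fin 2 → ℤ) := by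
  constructor
  · intro hinv
    have hmem : ∀ x ∈ L, A.mulVecLin x ∈ L := fun x hx => hinv ⟨x, hx, rfl⟩
    -- scaling by the cardinality of the quotient lands in L
    set n : ℕ := Nat.card ((Fin 2 → ℤ) ⧸ L) with hn
    have hn0 : (n : ℤ) ≠ 0 := by exact_mod_cast Nat.card_pos.ne'
    have hnL : ∀ x : Fin 2 → ℤ, (n : ℤ) • x ∈ L := by
      intro x
      have : (n : ℤ) • (Submodule.Quotient.mk x : (Fin 2 → ℤ) ⧸ L) = 0 := by
        rw [natCast_zsmul]
        exact card_nsmul_eq_zero'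
      rwa [← Submodule.Quotient.mk_smul, Submodule.Quotient.mk_eq_zero] at this
    -- L is free of rank 2
    have hrank : Module.finrank ℤ L = 2 := by
      have hle : Module.finrank ℤ L ≤ 2 := by
        have := Submodule.finrank_le L
        simpa using this
      have hge : 2 ≤ Module.finrank ℤ L := by
        let g : (Fin 2 → ℤ) →ₗ[ℤ] L :=
          { toFun := fun x => ⟨(n : ℤ) • x, hnL x⟩
            map_add' := by intro x y; ext; simp [smul_add]; ring
            map_smul' := by intro c x; ext; simp [smul_comm]; ring }
        have hginj : Function.Injective g := by
          intro x y hxy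
          have : (n : ℤ) • x = (n : ℤ) • y := congrArg Subtype.val hxy
          exact smul_right_injective _ hn0 this
        have := LinearMap.finrank_le_finrank_of_injective hginj
        simpa using this
      omega
    let b : Module.Basis (Fin 2) ℤ L := Module.finBasisOfFinrankEq ℤ L hrank
    let h : (Fin 2 → ℤ) ≃ₗ[ℤ] L := b.equivFun.symm
    -- the restriction of A to L
    let f : L →ₗ[ℤ] L := (A.mulVecLin).restrict hmem
    let B : Matrix (Fin 2) (Fin 2) ℤ :=
      LinearMap.toMatrix' ((h.symm : L →ₗ[ℤ] (Fin 2 → ℤ)) ∘ₗ f ∘ₗ (h : (Fin 2 → ℤ) →ₗ[ℤ] L))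
    have hBapp : ∀ v : Fin 2 → ℤ, B.mulVecLin v = h.symm (f (h v)) := by
      intro v
      rw [← Matrix.toLin'_apply', Matrix.toLin'_toMatrix']; rfl
    have hcomm : ∀ v : Fin 2 → ℤ, ((h (B.mulVecLin v) : Fin 2 → ℤ))
        = A.mulVecLin (h v : Fin 2 → ℤ) := by
      intro v
      rw [hBapp, h.apply_symm_apply]
      rfl
    refine ⟨B, h, ?_, hcomm⟩
    -- determinant computation
    let M : Matrix (Fin 2) (Fin 2) ℤ :=
      LinearMap.toMatrix' ((L.subtype) ∘ₗ (h : (Fin 2 → ℤ) →ₗ[ℤ] L))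
    have hMapp : ∀ v : Fin 2 → ℤ, M.mulVecLin v = (h v : Fin 2 → ℤ) := by
      intro v; rw [← Matrix.toLin'_apply', Matrix.toLin'_toMatrix']; rfl
    have hAMMB : A * M = M * B := by
      apply Matrix.toLin'.injective
      apply LinearMap.ext
      intro v
      have : (A * M).mulVecLin v = (M * B).mulVecLin v := by
        rw [Matrix.mulVecLin_mul, Matrix.mulVecLin_mul]
        simp only [LinearMap.comp_apply]
        rw [hMapp, hMapp, ← hcomm v]
      simpa [Matrix.mulVecLin] using this
    have hMdet : M.det ≠ 0 := by
      intro hdet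
      obtain ⟨v, hv0, hv⟩ := (Matrix.exists_mulVec_eq_zero_iff).2 hdet
      apply hv0
      have : M.mulVecLin v = 0 := hv
      rw [hMapp] at this
      have : h v = 0 := Subtype.ext (by simpa using this)
      simpa using congrArg h.symm this
    have := congrArg Matrix.det hAMMB
    rw [Matrix.det_mul, Matrix.det_mul, hA, one_mul] at this
    rw [← mul_one M.det] at this
    nth_rewrite 2 [mul_one M.det] at this
    exact (mul_left_cancel₀ hMdet this.symm)
  · rintro ⟨B, h, hB, hcomm⟩
    rintro x ⟨y, hy, rfl⟩
    obtain ⟨v, hv⟩ : ∃ v, (h v : Fin 2 → ℤ) = y := ⟨h.symm ⟨y, hy⟩, by simp⟩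
    rw [← hv, ← hcomm]
    exact (h (B.mulVecLin v)).2
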